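/- Let f be holomorphic on the annulus {z ∈ ℂ : e^{−(s+R)} < |z| < e^{s+R}}, where s > 0 and R > 0. Then the Dirichlet energies over nested sub-annuli satisfy ∫_{e^{−s} < |z| < e^{s}} |f′(z)|² dA(z) ≤ e^{−2R} · ∫_{e^{−(s+R)} < |z| < e^{s+R}} |f′(z)|² dA(z), where dA is Lebesgue area measure on ℂ (the right-hand side being allowed to be infinite). -/

import Mathlib

open Real MeasureTheory Set Filter AddCircle
open scoped ENNReal

namespace AnnulusEnergyAux

noncomputable section

lemma preimage_neg_Ioo (u : ℝ) : (Neg.neg ⁻¹' (Ioo (-u) u) : Set ℝ) = Ioo (-u) u := by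
  ext x; simp only [mem_preimage, mem_Ioo]; constructor <;> rintro ⟨h1, h2⟩ <;>
    constructor <;> linarith

lemma refl_lintegral (u m : ℝ) :
    ∫⁻ x in Ioo (-u) u, ENNReal.ofReal (Real.exp (m*x)) =
      ∫⁻ x in Ioo (-u) u, ENNReal.ofReal (Real.exp (-m*x)) := by
  have h := (Measure.measurePreserving_neg (volume : Measure ℝ)).setLIntegral_comp_preimage_emb
    (Homeomorph.neg ℝ).measurableEmbedding
    (fun x => ENNReal.ofReal (Real.exp (m*x))) (Ioo (-u) u)
  rw [preimage_neg_Ioo] at h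
  rw [← h]
  apply setLIntegral_congr_fun measurableSet_Ioo
  intro x _
  ring_nf

lemma trans_lintegral (s R m : ℝ) :
    ∫⁻ x in Ioo (-s) s, ENNReal.ofReal (Real.exp (m*(x+R))) =
      ∫⁻ x in Ioo (R-s) (R+s), ENNReal.ofReal (Real.exp (m*x)) := by
  have h := (measurePreserving_add_right (volume : Measure ℝ) R).setLIntegral_comp_preimage_emb
    (MeasurableEmbedding.id.comp (Homeomorph.addRight R).measurableEmbedding)
    (fun x => ENNReal.ofReal (Real.exp (m*x))) (Ioo (R-s) (R+s))
  have hpre : ((· + R) ⁻¹' (Ioo (R-s) (R+s)) : Set ℝ) = Ioo (-s) s := by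
    ext x; simp only [mem_preimage, mem_Ioo]; constructor <;> rintro ⟨h1, h2⟩ <;>
      constructor <;> linarith
  rw [hpre] at h
  exact h

lemma mode_ineq_pos (s R m : ℝ) (hs : 0 < s) (hR : 0 < R) (hm : 2 ≤ m) :
    ∫⁻ x in Ioo (-s) s, ENNReal.ofReal (Real.exp (m*x)) ≤
      ENNReal.ofReal (Real.exp (-(2*R))) *
        ∫⁻ x in Ioo (-(s+R)) (s+R), ENNReal.ofReal (Real.exp (m*x)) := by
  calc ∫⁻ x in Ioo (-s) s, ENNReal.ofReal (Real.exp (m*x))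
      ≤ ∫⁻ x in Ioo (-s) s,
          ENNReal.ofReal (Real.exp (-(2*R))) * ENNReal.ofReal (Real.exp (m*(x+R))) := by
        apply lintegral_mono
        intro x
        dsimp only
        rw [← ENNReal.ofReal_mul (Real.exp_nonneg _), ← Real.exp_add]
        apply ENNReal.ofReal_le_ofReal
        apply Real.exp_le_exp.2
        nlinarith
    _ = ENNReal.ofReal (Real.exp (-(2*R))) *
          ∫⁻ x in Ioo (-s) s, ENNReal.ofReal (Real.exp (m*(x+R))) :=
        lintegral_const_mul' _ _ ENNReal.ofReal_ne_top
    _ = ENNReal.ofReal (Real.exp (-(2*R))) *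
          ∫⁻ x in Ioo (R-s) (R+s), ENNReal.ofReal (Real.exp (m*x)) := by
        rw [trans_lintegral]
    _ ≤ ENNReal.ofReal (Real.exp (-(2*R))) *
          ∫⁻ x in Ioo (-(s+R)) (s+R), ENNReal.ofReal (Real.exp (m*x)) := by
        gcongr _ * ?_
        apply lintegral_mono_set
        apply Ioo_subset_Ioo <;> linarith

lemma mode_ineq (s R : ℝ) (hs : 0 < s) (hR : 0 < R) (m : ℝ) (hm : 2 ≤ |m|) :
    ∫⁻ x in Ioo (-s) s, ENNReal.ofReal (Real.exp (m*x)) ≤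
      ENNReal.ofReal (Real.exp (-(2*R))) *
        ∫⁻ x in Ioo (-(s+R)) (s+R), ENNReal.ofReal (Real.exp (m*x)) := by
  -- reduce to the case 2 ≤ m using reflection
  rcases abs_cases m with ⟨heq, _⟩ | ⟨hneg, _⟩
  · exact mode_ineq_pos s R m hs hR (heq ▸ hm)
  · rw [show m = -(-m) by ring, refl_lintegral s (-(-m)), refl_lintegral (s+R) (-(-m))]
    simp only [neg_neg]
    exact mode_ineq_pos s R (-m) hs hR (by rw [hneg] at hm; linarith)

def ann (a : ℝ) : Set ℂ := {z : ℂ | Real.exp (-a) < ‖z‖ ∧ ‖z‖ < Real.exp a}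

lemma isOpen_ann (a : ℝ) : IsOpen (ann a) := by
  have : ann a = (fun z : ℂ => ‖z‖) ⁻¹' (Ioo (Real.exp (-a)) (Real.exp a)) := by
    ext z; simp [ann, mem_Ioo]
  rw [this]
  exact isOpen_Ioo.preimage continuous_norm

lemma one_mem (a : ℝ) (ha : 0 < a) : (Real.exp (-a)) < 1 ∧ 1 < Real.exp a :=
  ⟨by simpa using Real.exp_lt_exp.2 (by linarith : -a < 0),
   by simpa using Real.exp_lt_exp.2 (by linarith : (0:ℝ) < a)⟩

lemma closedAnn_subset {a r₁ r₂ : ℝ} (h1 : Real.exp (-a) < r₁) (h2 : r₂ < Real.exp a) :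
    Metric.closedBall (0:ℂ) r₂ \ Metric.ball 0 r₁ ⊆ ann a := by
  rintro z ⟨hz2, hz1⟩
  rw [Metric.mem_closedBall, Complex.dist_eq, sub_zero] at hz2
  rw [Metric.mem_ball, Complex.dist_eq, sub_zero, not_lt] at hz1
  exact ⟨lt_of_lt_of_le h1 hz1, lt_of_le_of_lt hz2 h2⟩

/-- The circle integrals of `z^(-1-n) * g z` over circles inside the annulus are all equal. -/
lemma circleIntegral_indep {a : ℝ} (ha : 0 < a) {g : ℂ → ℂ}
    (hg : DifferentiableOn ℂ g (ann a)) (n : ℤ) {r : ℝ}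
    (hr : r ∈ Ioo (Real.exp (-a)) (Real.exp a)) :
    (∮ z in C(0, r), z^(-1-n) * g z) = ∮ z in C(0, 1), z^(-1-n) * g z := by
  have key : ∀ r₁ r₂ : ℝ, Real.exp (-a) < r₁ → r₁ ≤ r₂ → r₂ < Real.exp a →
      (∮ z in C(0, r₂), z^(-1-n) * g z) = ∮ z in C(0, r₁), z^(-1-n) * g z := by
    intro r₁ r₂ ha1 h12 ha2
    have hr₁ : 0 < r₁ := lt_trans (Real.exp_pos _) ha1
    have hsub := closedAnn_subset (a := a) ha1 ha2
    apply Complex.circleIntegral_eq_of_differentiable_on_annulus_off_countable hr₁ h12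
      Set.countable_empty
    · apply ContinuousOn.mul
      · apply ContinuousOn.zpow₀ continuousOn_id
        intro z hz
        left
        simp only [id_eq]
        rintro rfl
        exact hz.2 (Metric.mem_ball_self hr₁)
      · exact hg.continuousOn.mono hsub
    · rintro z ⟨⟨hz2, hz1⟩, -⟩
      rw [Metric.mem_ball, Complex.dist_eq, sub_zero] at hz2
      rw [Metric.mem_closedBall, Complex.dist_eq, sub_zero, not_le] at hz1
      have hz0 : z ≠ 0 := by
        rintro rfl
        simp only [norm_zero] at hz1
        linarith
      have hzA : z ∈ ann a := ⟨lt_trans ha1 hz1, hz2.trans ha2⟩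
      exact (differentiableAt_zpow.2 (Or.inl hz0)).mul
        ((hg z hzA).differentiableAt ((isOpen_ann a).mem_nhds hzA))
  rcases le_or_gt r 1 with h | h
  · exact (key r 1 hr.1 h (one_mem a ha).2).symm
  · exact key 1 r (one_mem a ha).1 h.le hr.2

lemma circleIntegral_eq_integral (g : ℂ → ℂ) (n : ℤ) {r : ℝ} (hr : 0 < r) :
    (∮ z in C(0, r), z^(-1-n) * g z) =
      Complex.I * (r:ℂ)^(-n) * ∫ y in (0:ℝ)..(2*π),
        Complex.exp (-(n:ℂ) * (y * Complex.I)) * g ((r:ℂ) * Complex.exp (y * Complex.I)) := by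
  rw [circleIntegral, ← intervalIntegral.integral_const_mul]
  apply intervalIntegral.integral_congr
  intro y hy
  have hz : circleMap 0 r y = (r:ℂ) * Complex.exp (y * Complex.I) := by simp [circleMap]
  have hw : Complex.exp (y * Complex.I) ≠ 0 := Complex.exp_ne_zero _
  have hrC : (r:ℂ) ≠ 0 := by exact_mod_cast hr.ne'
  have e1 : ∀ c : ℂ, c ≠ 0 → c * c^(-1-n) = c^(-n) := by
    intro c hc
    rw [mul_comm, ← zpow_add_one₀ hc, show (-1-n)+1 = -n from by ring]
  have hexp : Complex.exp (-(n:ℂ) * (y * Complex.I)) = Complex.exp (y * Complex.I) ^ (-n) := by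
    rw [show -(n:ℂ) * (y * Complex.I) = ((-n : ℤ) : ℂ) * (y * Complex.I) from by push_cast; ring,
      Complex.exp_int_mul]
  simp only [deriv_circleMap, hz, smul_eq_mul, hexp]
  have e2 : ((r:ℂ) * Complex.exp (y * Complex.I)) *
      ((r:ℂ) * Complex.exp (y * Complex.I))^(-1-n)
      = (r:ℂ)^(-n) * Complex.exp (y * Complex.I)^(-n) := by
    rw [e1 _ (mul_ne_zero hrC hw), mul_zpow]
  calc ((r:ℂ) * Complex.exp (y * Complex.I) * Complex.I) *
        (((r:ℂ) * Complex.exp (y * Complex.I))^(-1-n) * g ((r:ℂ) * Complex.exp (y * Complex.I)))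
      = (((r:ℂ) * Complex.exp (y * Complex.I)) * ((r:ℂ) * Complex.exp (y * Complex.I))^(-1-n)) *
          (Complex.I * g ((r:ℂ) * Complex.exp (y * Complex.I))) := by ring
    _ = _ := by rw [e2]; ring

lemma coeff_eq {a : ℝ} (ha : 0 < a) {g : ℂ → ℂ} (hg : DifferentiableOn ℂ g (ann a)) (n : ℤ)
    {r : ℝ} (hr : r ∈ Ioo (Real.exp (-a)) (Real.exp a)) :
    fourierCoeffOn (by positivity : (0:ℝ) < 2*π)
        (fun y => g ((r:ℂ) * Complex.exp (y * Complex.I))) n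
      = (r:ℂ)^n * ((2*π*Complex.I)⁻¹ * ∮ z in C(0,1), z^(-1-n) * g z) := by
  have hr0 : 0 < r := lt_trans (Real.exp_pos _) hr.1
  have h1 := circleIntegral_eq_integral g n hr0
  rw [circleIntegral_indep ha hg n hr] at h1
  rw [fourierCoeffOn_eq_integral, h1]
  have hrn : ((r:ℂ))^n ≠ 0 := zpow_ne_zero _ (by exact_mod_cast hr0.ne')
  have hJ : (∫ y in (0:ℝ)..(2*π), (fourier (-n) (y : AddCircle (2*π - 0)) : ℂ) •
        g ((r:ℂ) * Complex.exp (y * Complex.I)))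
      = ∫ y in (0:ℝ)..(2*π), Complex.exp (-(n:ℂ) * (y * Complex.I)) *
          g ((r:ℂ) * Complex.exp (y * Complex.I)) := by
    apply intervalIntegral.integral_congr
    intro y hy
    simp only [smul_eq_mul]
    congr 1
    rw [fourier_coe_apply]
    congr 1
    push_cast
    field_simp [Complex.ofReal_ne_zero.2 Real.pi_ne_zero]
    ring
  rw [hJ, Complex.real_smul, zpow_neg]
  set J := ∫ y in (0:ℝ)..(2*π), Complex.exp (-(n:ℂ) * (y * Complex.I)) *
      g ((r:ℂ) * Complex.exp (y * Complex.I)) with hJdef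
  rw [show (r:ℂ)^n * ((2*(π:ℂ)*Complex.I)⁻¹ * (Complex.I * ((r:ℂ)^n)⁻¹ * J)) =
      ((r:ℂ)^n * ((r:ℂ)^n)⁻¹) * ((Complex.I)⁻¹ * Complex.I) * ((2*(π:ℂ))⁻¹ * J) from by
        rw [mul_inv]; ring,
    mul_inv_cancel₀ hrn, inv_mul_cancel₀ Complex.I_ne_zero, one_mul, one_mul]
  push_cast
  norm_num

/-- The circle integral of a global complex derivative vanishes. -/
lemma circleIntegral_deriv_eq_zero {a : ℝ} (ha : 0 < a) {f : ℂ → ℂ}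
    (hf : DifferentiableOn ℂ f (ann a)) :
    (∮ z in C(0, 1), deriv f z) = 0 := by
  have h1 : ∀ y : ℝ, circleMap 0 1 y ∈ ann a := by
    intro y
    have : ‖circleMap 0 1 y‖ = 1 := by
      rw [norm_circleMap_zero]; norm_num
    rw [ann, mem_setOf_eq, this]
    exact one_mem a ha
  have hF : ∀ y : ℝ, HasDerivAt (fun t => f (circleMap 0 1 t))
      ((circleMap 0 1 y * Complex.I) • deriv f (circleMap 0 1 y)) y := by
    intro y
    have hd : DifferentiableAt ℂ f (circleMap 0 1 y) :=
      (hf _ (h1 y)).differentiableAt ((isOpen_ann a).mem_nhds (h1 y))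
    exact HasDerivAt.scomp y hd.hasDerivAt (hasDerivAt_circleMap 0 1 y)
  have hder : ContinuousOn (deriv f) (ann a) :=
    ((hf.analyticOnNhd (isOpen_ann a)).deriv).continuousOn
  have hcont : Continuous (fun y : ℝ =>
      (circleMap 0 1 y * Complex.I) • deriv f (circleMap 0 1 y)) := by
    apply Continuous.fun_smul
    · exact (continuous_circleMap 0 1).mul continuous_const
    · exact hder.comp_continuous (continuous_circleMap 0 1) h1
  have hftc := intervalIntegral.integral_eq_sub_of_hasDerivAt
    (f := fun t => f (circleMap 0 1 t)) (a := (0:ℝ)) (b := 2*π)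
    (fun y _ => hF y) (hcont.intervalIntegrable 0 (2*π))
  rw [circleIntegral]
  simp only [deriv_circleMap]
  rw [hftc]
  show f (circleMap 0 1 (2*π)) - f (circleMap 0 1 0) = 0
  rw [show (2*π : ℝ) = 0 + 2*π from by ring, periodic_circleMap 0 1 0, sub_self]

lemma memLp_of_continuous {T : ℝ} [hT : Fact (0 < T)] {E : Type*} [NormedAddCommGroup E]
    (F : AddCircle T → E) (hF : Continuous F) (p : ℝ≥0∞) :
    MemLp F p haarAddCircle := by
  rcases isCompact_univ.exists_isMaxOn univ_nonempty hF.norm.continuousOn with ⟨x0, -, hx0⟩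
  have hb : MemLp F ⊤ haarAddCircle :=
    memLp_top_of_bound hF.aestronglyMeasurable _ (ae_of_all _ fun x => hx0 (mem_univ x))
  exact hb.mono_exponent le_top

lemma parseval_circle (G : ℝ → ℂ) (hG : Continuous G) (hper : ∀ y, G y = G (y + 2*π)) :
    ∫⁻ y in Ioo (0:ℝ) (2*π), ENNReal.ofReal (‖G y‖^2) =
      ENNReal.ofReal (2*π) * ∑' n : ℤ, ENNReal.ofReal
        (‖fourierCoeffOn (by positivity : (0:ℝ) < 2*π) G n‖^2) := by
  haveI hT : Fact ((0:ℝ) < 2*π) := ⟨by positivity⟩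
  set Gl : AddCircle (2*π) → ℂ := AddCircle.liftIco (2*π) 0 G with hGl
  have hcont : Continuous Gl :=
    AddCircle.liftIco_continuous (by simpa using hper 0) hG.continuousOn
  have hmem : MemLp Gl 2 haarAddCircle := memLp_of_continuous Gl hcont 2
  set fL := hmem.toLp Gl with hfL
  have hae : (fL : AddCircle (2*π) → ℂ) =ᵐ[haarAddCircle] Gl := hmem.coeFn_toLp
  -- Parseval in Bochner form
  have hps := tsum_sq_fourierCoeff fL
  have hcoeff : ∀ n : ℤ, fourierCoeff (fL : AddCircle (2*π) → ℂ) n = fourierCoeff Gl n := by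
    intro n
    apply integral_congr_ae
    filter_upwards [hae] with t ht
    rw [ht]
  have hGlcoeff : ∀ n : ℤ, fourierCoeff Gl n =
      fourierCoeffOn (by positivity : (0:ℝ) < 2*π) G n := by
    intro n
    have := fourierCoeff_liftIco_eq (T := 2*π) (a := 0) G n
    simp only [zero_add] at this
    exact this
  have hint : ∫ t : AddCircle (2*π), ‖(fL : AddCircle (2*π) → ℂ) t‖^2 ∂haarAddCircle
      = ∫ t : AddCircle (2*π), ‖Gl t‖^2 ∂haarAddCircle := by
    apply integral_congr_ae
    filter_upwards [hae] with t ht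
    rw [ht]
  rw [hint] at hps
  simp only [hcoeff, hGlcoeff] at hps
  -- summability of the coefficient squares
  have hsum : Summable (fun n : ℤ =>
      ‖fourierCoeffOn (by positivity : (0:ℝ) < 2*π) G n‖^2) := by
    have h1 := (memℓp_gen_iff (p := 2)
        (by norm_num : (0:ℝ) < (2:ℝ≥0∞).toReal)).1 (lp.memℓp (fourierBasis.repr fL))
    have h2 : ∀ n : ℤ, ‖fourierBasis.repr fL n‖ ^ ((2:ℝ≥0∞)).toReal
        = ‖fourierCoeffOn (by positivity : (0:ℝ) < 2*π) G n‖^2 := by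
      intro n
      rw [fourierBasis_repr, hcoeff, hGlcoeff]
      rw [show ((2:ℝ≥0∞)).toReal = ((2:ℕ):ℝ) from by norm_num, Real.rpow_natCast]
    exact (summable_congr h2).1 h1
  -- left-hand side
  have hIoo : ∫⁻ y in Ioo (0:ℝ) (2*π), ENNReal.ofReal (‖G y‖^2)
      = ∫⁻ y in Ioc (0:ℝ) (0 + 2*π), ENNReal.ofReal (‖Gl (y : AddCircle (2*π))‖^2) := by
    rw [← setLIntegral_congr (Ioo_ae_eq_Ioc (a := (0:ℝ)) (b := 0 + 2*π)),
      show (0:ℝ) + 2*π = 2*π from by ring]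
    apply setLIntegral_congr_fun measurableSet_Ioo
    intro y hy
    dsimp only
    rw [hGl, AddCircle.liftIco_coe_apply (by simpa using Ioo_subset_Ico_self hy)]
  rw [hIoo]
  rw [AddCircle.lintegral_preimage (2*π) 0 (fun t => ENNReal.ofReal (‖Gl t‖^2))]
  -- pass to haar measure
  rw [AddCircle.volume_eq_smul_haarAddCircle, lintegral_smul_measure]
  congr 1
  -- Bochner to lower integral
  have hInt : Integrable (fun t : AddCircle (2*π) => ‖Gl t‖^2) haarAddCircle :=
    memLp_one_iff_integrable.1 (memLp_of_continuous _ (hcont.norm.pow 2) 1)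
  rw [← ofReal_integral_eq_lintegral_ofReal hInt
    (ae_of_all _ fun t => sq_nonneg _), ← hps, ENNReal.ofReal_tsum_of_nonneg
    (fun n => sq_nonneg _) hsum]

lemma det_mul_clm (c : ℂ) :
    (((1 : ℂ →L[ℂ] ℂ).smulRight c).restrictScalars ℝ).det = Complex.normSq c := by
  rw [ContinuousLinearMap.det, ← LinearMap.det_toMatrix Complex.basisOneI, Matrix.det_fin_two]
  simp only [LinearMap.toMatrix_apply, Complex.coe_basisOneI, ContinuousLinearMap.coe_coe,
    ContinuousLinearMap.coe_restrictScalars', ContinuousLinearMap.smulRight_apply,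
    ContinuousLinearMap.one_apply, Matrix.cons_val_zero, Matrix.cons_val_one, Matrix.head_cons,
    Complex.coe_basisOneI_repr, smul_eq_mul, one_mul]
  simp [Complex.normSq_apply]

lemma null_real_axis : (volume : Measure ℂ) {z : ℂ | z.im = 0} = 0 := by
  have h : {z : ℂ | z.im = 0} = Complex.measurableEquivRealProd ⁻¹' ((univ : Set ℝ) ×ˢ {0}) := by
    ext z
    simp [Complex.measurableEquivRealProd, Complex.equivRealProd, eq_comm]
  rw [h, Complex.volume_preserving_equiv_real_prod.measure_preimage]
  · rw [show (volume : Measure (ℝ × ℝ)) = (volume : Measure ℝ).prod volume from rfl,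
      Measure.prod_prod]
    simp
  · exact (MeasurableSet.univ.prod (measurableSet_singleton 0)).nullMeasurableSet

/-- Change of variables `z = exp (x + y I)` for the energy integral. -/
lemma energy_cov {a u : ℝ} (hu : 0 < u) (hua : u ≤ a) {g : ℂ → ℂ}
    (hg : ContinuousOn g (ann a)) :
    ∫⁻ z in ann u, ENNReal.ofReal (‖g z‖^2) =
      ∫⁻ x in Ioo (-u) u, ∫⁻ y in Ioo (0:ℝ) (2*π),
        ENNReal.ofReal (Real.exp (2*x)) *
          ENNReal.ofReal (‖g (Complex.exp (x + y * Complex.I))‖^2) := by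
  set S : Set ℂ := Complex.measurableEquivRealProd ⁻¹' (Ioo (-u) u ×ˢ Ioo (0:ℝ) (2*π)) with hSdef
  have hSmem : ∀ w : ℂ, w ∈ S ↔ (w.re ∈ Ioo (-u) u ∧ w.im ∈ Ioo (0:ℝ) (2*π)) := by
    intro w
    simp [hSdef, Complex.measurableEquivRealProd, Complex.equivRealProd]
  have hS : MeasurableSet S :=
    Complex.measurableEquivRealProd.measurable (measurableSet_Ioo.prod measurableSet_Ioo)
  -- the image of S under exp
  have himage_sub : Complex.exp '' S ⊆ ann u := by
    rintro - ⟨w, hw, rfl⟩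
    rw [hSmem] at hw
    constructor
    · rw [Complex.norm_exp]; exact Real.exp_lt_exp.2 hw.1.1
    · rw [Complex.norm_exp]; exact Real.exp_lt_exp.2 hw.1.2
  have hsub_image : ann u \ {z : ℂ | z.im = 0} ⊆ Complex.exp '' S := by
    rintro z ⟨hz, hzim⟩
    have hz0 : z ≠ 0 := by
      rintro rfl
      have := hz.1
      rw [norm_zero] at this
      linarith [Real.exp_pos (-u)]
    have hlog1 : -u < Real.log ‖z‖ := by
      have := Real.log_lt_log (Real.exp_pos _) hz.1
      rwa [Real.log_exp] at this
    have hlog2 : Real.log ‖z‖ < u := by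
      have := Real.log_lt_log (norm_pos_iff.mpr hz0) hz.2
      rwa [Real.log_exp] at this
    have harg0 : Complex.arg z ≠ 0 := fun h => hzim (Complex.arg_eq_zero_iff.1 h).2
    rcases lt_or_gt_of_ne harg0 with hneg | hpos
    · refine ⟨Complex.log z + 2*π*Complex.I, ?_, ?_⟩
      · rw [hSmem]
        have h1 := Complex.arg_mem_Ioc z
        constructor
        · rw [show (Complex.log z + 2*π*Complex.I).re = Real.log ‖z‖ from by
            simp [Complex.log_re]]
          exact ⟨hlog1, hlog2⟩
        · rw [show (Complex.log z + 2*π*Complex.I).im = z.arg + 2*π from by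
            simp [Complex.log_im]]
          constructor
          · have := h1.1; linarith [Real.pi_pos]
          · linarith
      · rw [Complex.exp_add, Complex.exp_log hz0]
        simp [Complex.exp_two_pi_mul_I]
    · refine ⟨Complex.log z, ?_, Complex.exp_log hz0⟩
      rw [hSmem]
      constructor
      · rw [show (Complex.log z).re = Real.log ‖z‖ from Complex.log_re z]
        exact ⟨hlog1, hlog2⟩
      · have h1 := Complex.arg_mem_Ioc z
        rw [show (Complex.log z).im = z.arg from Complex.log_im z]
        exact ⟨hpos, lt_of_le_of_lt h1.2 (by linarith [Real.pi_pos])⟩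
  have hae : Complex.exp '' S =ᵐ[volume] ann u := by
    rw [Filter.eventuallyEq_set]
    have hnull := null_real_axis
    rw [measure_eq_zero_iff_ae_notMem] at hnull
    filter_upwards [hnull] with z hz
    constructor
    · exact fun h => himage_sub h
    · intro h
      exact hsub_image ⟨h, hz⟩
  -- injectivity
  have hinj : InjOn Complex.exp S := by
    intro w₁ h₁ w₂ h₂ he
    rw [hSmem] at h₁ h₂
    rcases Complex.exp_eq_exp_iff_exists_int.1 he with ⟨k, hk⟩
    have him : w₁.im = w₂.im + k * (2*π) := by
      have := congrArg Complex.im hk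
      simpa [Complex.add_im, Complex.mul_im, Complex.mul_re] using this
    obtain ⟨ha1, ha2⟩ := h₁.2
    obtain ⟨hb1, hb2⟩ := h₂.2
    have hπ := Real.pi_pos
    have hk1 : (-1:ℝ) < (k:ℝ) := by
      by_contra hcon
      push_neg at hcon
      have := mul_le_mul_of_nonneg_right hcon (by positivity : (0:ℝ) ≤ 2*π)
      linarith
    have hk2 : ((k:ℝ)) < 1 := by
      by_contra hcon
      push_neg at hcon
      have := mul_le_mul_of_nonneg_right hcon (by positivity : (0:ℝ) ≤ 2*π)
      linarith
    have hk0 : k = 0 := by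
      have l1 : (-1:ℤ) < k := by exact_mod_cast hk1
      have l2 : k < 1 := by exact_mod_cast hk2
      omega
    rw [hk, hk0]
    simp
  -- derivative
  have hfd : ∀ w ∈ S, HasFDerivWithinAt Complex.exp
      (((1 : ℂ →L[ℂ] ℂ).smulRight (Complex.exp w)).restrictScalars ℝ) S w := by
    intro w _
    exact ((hasDerivAt_iff_hasFDerivAt.1 (Complex.hasDerivAt_exp w)).restrictScalars
      ℝ).hasFDerivWithinAt
  set φ : ℂ → ℝ≥0∞ := fun z => ENNReal.ofReal (‖g z‖^2) with hφ
  have hψmaps : ∀ p : ℝ × ℝ, p ∈ Ioo (-u) u ×ˢ Ioo (0:ℝ) (2*π) →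
      Complex.exp (p.1 + p.2 * Complex.I) ∈ ann a := by
    rintro ⟨x, y⟩ ⟨hx, -⟩
    have hre : ((x:ℂ) + (y:ℂ) * Complex.I).re = x := by simp
    constructor
    · rw [Complex.norm_exp, hre]
      exact lt_of_le_of_lt (Real.exp_le_exp.2 (by linarith [hx.1] : -a ≤ -u))
        (Real.exp_lt_exp.2 hx.1)
    · rw [Complex.norm_exp, hre]
      exact lt_of_lt_of_le (Real.exp_lt_exp.2 hx.2) (Real.exp_le_exp.2 hua)
  calc ∫⁻ z in ann u, ENNReal.ofReal (‖g z‖^2)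
      = ∫⁻ z in Complex.exp '' S, φ z := (setLIntegral_congr hae).symm
    _ = ∫⁻ w in S, ENNReal.ofReal
          |(((1 : ℂ →L[ℂ] ℂ).smulRight (Complex.exp w)).restrictScalars ℝ).det| *
          φ (Complex.exp w) :=
        lintegral_image_eq_lintegral_abs_det_fderiv_mul volume hS hfd hinj φ
    _ = ∫⁻ w in S, ENNReal.ofReal (Real.exp (2*w.re)) * φ (Complex.exp w) := by
        apply lintegral_congr
        intro w
        congr 2
        rw [det_mul_clm, abs_of_nonneg (Complex.normSq_nonneg _), Complex.normSq_eq_norm_sq,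
          Complex.norm_exp, sq, ← Real.exp_add]
        ring_nf
    _ = ∫⁻ p in Ioo (-u) u ×ˢ Ioo (0:ℝ) (2*π), ENNReal.ofReal (Real.exp (2*p.1)) *
          φ (Complex.exp (p.1 + p.2 * Complex.I)) := by
        have h := (Complex.volume_preserving_equiv_real_prod).setLIntegral_comp_preimage_emb
          (Complex.measurableEquivRealProd.measurableEmbedding)
          (fun p : ℝ × ℝ => ENNReal.ofReal (Real.exp (2*p.1)) *
            φ (Complex.exp (p.1 + p.2 * Complex.I)))
          (Ioo (-u) u ×ˢ Ioo (0:ℝ) (2*π))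
        rw [← h]
        apply lintegral_congr
        intro w
        have he : Complex.measurableEquivRealProd w = (w.re, w.im) := rfl
        rw [he]
        simp only
        rw [Complex.re_add_im]
    _ = ∫⁻ p in Ioo (-u) u ×ˢ Ioo (0:ℝ) (2*π),
          ENNReal.ofReal (Real.exp (2*p.1) *
            ‖g (Complex.exp (p.1 + p.2 * Complex.I))‖^2) := by
        apply lintegral_congr
        intro p
        rw [hφ, ← ENNReal.ofReal_mul (Real.exp_nonneg _)]
    _ = ∫⁻ x in Ioo (-u) u, ∫⁻ y in Ioo (0:ℝ) (2*π),
          ENNReal.ofReal (Real.exp (2*x) *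
            ‖g (Complex.exp (x + y * Complex.I))‖^2) := by
        have hrect : MeasurableSet (Ioo (-u) u ×ˢ Ioo (0:ℝ) (2*π)) :=
          measurableSet_Ioo.prod measurableSet_Ioo
        have hcontF : ContinuousOn (fun p : ℝ × ℝ => Real.exp (2*p.1) *
            ‖g (Complex.exp (p.1 + p.2 * Complex.I))‖^2) (Ioo (-u) u ×ˢ Ioo (0:ℝ) (2*π)) := by
          apply ContinuousOn.mul
          · exact (Real.continuous_exp.comp (continuous_const.mul continuous_fst)).continuousOn
          · have hψ : Continuous (fun p : ℝ × ℝ => Complex.exp (p.1 + p.2 * Complex.I)) := by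
              apply Complex.continuous_exp.comp
              exact (Complex.continuous_ofReal.comp continuous_fst).add
                ((Complex.continuous_ofReal.comp continuous_snd).mul continuous_const)
            have hgψ : ContinuousOn (fun p : ℝ × ℝ =>
                g (Complex.exp (p.1 + p.2 * Complex.I)))
                (Ioo (-u) u ×ˢ Ioo (0:ℝ) (2*π)) :=
              hg.comp hψ.continuousOn hψmaps
            exact (hgψ.norm).pow 2
        have hmeas : AEMeasurable (fun p : ℝ × ℝ => ENNReal.ofReal (Real.exp (2*p.1) *
            ‖g (Complex.exp (p.1 + p.2 * Complex.I))‖^2))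
            (((volume : Measure ℝ).restrict (Ioo (-u) u)).prod
              ((volume : Measure ℝ).restrict (Ioo (0:ℝ) (2*π)))) := by
          rw [Measure.prod_restrict]
          exact ENNReal.measurable_ofReal.comp_aemeasurable (hcontF.aemeasurable hrect)
        rw [Measure.volume_eq_prod, ← Measure.prod_restrict, lintegral_prod _ hmeas]
    _ = ∫⁻ x in Ioo (-u) u, ∫⁻ y in Ioo (0:ℝ) (2*π),
          ENNReal.ofReal (Real.exp (2*x)) *
            ENNReal.ofReal (‖g (Complex.exp (x + y * Complex.I))‖^2) := by
        apply lintegral_congr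
        intro x
        apply lintegral_congr
        intro y
        rw [← ENNReal.ofReal_mul (Real.exp_nonneg _)]

lemma exp_zpow (x : ℝ) (n : ℤ) : (Real.exp x) ^ n = Real.exp (n * x) := by
  rw [← Real.rpow_intCast (Real.exp x) n, Real.rpow_def_of_pos (Real.exp_pos x), Real.log_exp,
    mul_comm]

/-- The energy over a sub-annulus decomposes as a sum over Fourier modes. -/
lemma energy_formula {a : ℝ} (ha : 0 < a) {g : ℂ → ℂ} (hg : DifferentiableOn ℂ g (ann a))
    {u : ℝ} (hu : 0 < u) (hua : u ≤ a) :
    ∫⁻ z in ann u, ENNReal.ofReal (‖g z‖^2) =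
      ∑' n : ℤ, ENNReal.ofReal (2*π *
          ‖(2*π*Complex.I)⁻¹ * (∮ z in C(0,1), z^(-1-n) * g z)‖^2) *
        ∫⁻ x in Ioo (-u) u, ENNReal.ofReal (Real.exp ((2*(n:ℝ)+2) * x)) := by
  set c : ℤ → ℂ := fun n => (2*π*Complex.I)⁻¹ * (∮ z in C(0,1), z^(-1-n) * g z) with hc
  rw [energy_cov hu hua hg.continuousOn]
  have hx_eq : ∀ x ∈ Ioo (-u) u,
      (∫⁻ y in Ioo (0:ℝ) (2*π), ENNReal.ofReal (Real.exp (2*x)) *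
        ENNReal.ofReal (‖g (Complex.exp (x + y*Complex.I))‖^2)) =
      ∑' n : ℤ, ENNReal.ofReal (2*π * ‖c n‖^2) *
        ENNReal.ofReal (Real.exp ((2*(n:ℝ)+2) * x)) := by
    intro x hx
    have hr : Real.exp x ∈ Ioo (Real.exp (-a)) (Real.exp a) :=
      ⟨Real.exp_lt_exp.2 (by linarith [hx.1]), Real.exp_lt_exp.2 (by linarith [hx.2])⟩
    have harg : ∀ y : ℝ, Complex.exp (x + y*Complex.I)
        = ((Real.exp x : ℝ) : ℂ) * Complex.exp (y*Complex.I) := by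
      intro y; rw [Complex.exp_add, Complex.ofReal_exp]
    have hmaps : ∀ y : ℝ, ((Real.exp x : ℝ) : ℂ) * Complex.exp (y*Complex.I) ∈ ann a := by
      intro y
      have : ‖((Real.exp x : ℝ) : ℂ) * Complex.exp (y*Complex.I)‖ = Real.exp x := by
        rw [norm_mul, Complex.norm_exp, Complex.norm_real, Real.norm_eq_abs, abs_of_pos (Real.exp_pos x)]
        simp
      rw [ann, mem_setOf_eq, this]
      exact hr
    have hGc : Continuous (fun y : ℝ => g (((Real.exp x : ℝ) : ℂ) * Complex.exp (y*Complex.I))) := by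
      apply hg.continuousOn.comp_continuous
      · exact continuous_const.mul (Complex.continuous_exp.comp
          ((Complex.continuous_ofReal).mul continuous_const))
      · exact hmaps
    have hper : ∀ y : ℝ, g (((Real.exp x : ℝ) : ℂ) * Complex.exp (y*Complex.I))
        = g (((Real.exp x : ℝ) : ℂ) * Complex.exp (((y + 2*π : ℝ) : ℂ)*Complex.I)) := by
      intro y
      congr 2
      rw [show ((y + 2*π : ℝ) : ℂ) * Complex.I = y*Complex.I + 2*π*Complex.I from by
        push_cast; ring, Complex.exp_add, Complex.exp_two_pi_mul_I, mul_one]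
    calc ∫⁻ y in Ioo (0:ℝ) (2*π), ENNReal.ofReal (Real.exp (2*x)) *
          ENNReal.ofReal (‖g (Complex.exp (x + y*Complex.I))‖^2)
        = ENNReal.ofReal (Real.exp (2*x)) * ∫⁻ y in Ioo (0:ℝ) (2*π),
            ENNReal.ofReal (‖g (((Real.exp x : ℝ) : ℂ) * Complex.exp (y*Complex.I))‖^2) := by
          rw [← lintegral_const_mul' _ _ ENNReal.ofReal_ne_top]
          apply setLIntegral_congr_fun measurableSet_Ioo
          intro y hy
          dsimp only
          rw [harg y]
      _ = ENNReal.ofReal (Real.exp (2*x)) * (ENNReal.ofReal (2*π) * ∑' n : ℤ,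
            ENNReal.ofReal (‖fourierCoeffOn (by positivity : (0:ℝ) < 2*π)
              (fun y => g (((Real.exp x : ℝ) : ℂ) * Complex.exp (y*Complex.I))) n‖^2)) := by
          rw [parseval_circle _ hGc hper]
      _ = ∑' n : ℤ, ENNReal.ofReal (Real.exp (2*x)) * (ENNReal.ofReal (2*π) *
            ENNReal.ofReal (‖fourierCoeffOn (by positivity : (0:ℝ) < 2*π)
              (fun y => g (((Real.exp x : ℝ) : ℂ) * Complex.exp (y*Complex.I))) n‖^2)) := by
          rw [ENNReal.tsum_mul_left, ENNReal.tsum_mul_left]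
      _ = ∑' n : ℤ, ENNReal.ofReal (2*π * ‖c n‖^2) *
            ENNReal.ofReal (Real.exp ((2*(n:ℝ)+2) * x)) := by
          apply tsum_congr
          intro n
          rw [coeff_eq ha hg n hr]
          simp only [hc]
          rw [norm_mul, norm_zpow, Complex.norm_real, Real.norm_eq_abs,
            abs_of_pos (Real.exp_pos x), exp_zpow, mul_pow]
          set K2 : ℝ := ‖(2*(π:ℂ)*Complex.I)⁻¹ * ∮ (z : ℂ) in C(0,1), z ^ (-1 - n) * g z‖ ^ 2
            with hK2
          have hK2nn : (0:ℝ) ≤ K2 := by rw [hK2]; positivity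
          rw [← ENNReal.ofReal_mul (by positivity : (0:ℝ) ≤ 2*π),
            ← ENNReal.ofReal_mul (Real.exp_nonneg _),
            ← ENNReal.ofReal_mul (mul_nonneg (by positivity : (0:ℝ) ≤ 2*π) hK2nn)]
          congr 1
          have hE : Real.exp (2*x) * (Real.exp ((n:ℝ)*x) * Real.exp ((n:ℝ)*x))
              = Real.exp ((2*(n:ℝ)+2)*x) := by
            rw [← Real.exp_add, ← Real.exp_add]
            congr 1
            ring
          rw [sq (Real.exp ((n:ℝ)*x))]
          linear_combination (2*π*K2) * hE
  rw [setLIntegral_congr_fun measurableSet_Ioo hx_eq]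
  have hmeas : ∀ n : ℤ, AEMeasurable (fun x : ℝ => ENNReal.ofReal (2 * π * ‖c n‖ ^ 2) *
      ENNReal.ofReal (Real.exp ((2 * (n:ℝ) + 2) * x))) (volume.restrict (Ioo (-u) u)) := by
    intro n
    exact (measurable_const.mul (ENNReal.measurable_ofReal.comp
      (Real.measurable_exp.comp (measurable_id.const_mul _)))).aemeasurable
  rw [lintegral_tsum hmeas]
  apply tsum_congr
  intro n
  simp only [hc]
  exact lintegral_const_mul' _ _ ENNReal.ofReal_ne_top

end

end AnnulusEnergyAux

open AnnulusEnergyAux Set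

/-- Energy decay for holomorphic functions on annuli: if `f` is holomorphic on
`{e^{−(s+R)} < |z| < e^{s+R}}`, then the Dirichlet energy of `f` over the inner
annulus `{e^{−s} < |z| < e^{s}}` is at most `e^{−2R}` times the Dirichlet energy
over the whole annulus (the latter being allowed to be infinite). -/
theorem holomorphic_annulus_energy_decay (s R : ℝ) (hs : 0 < s) (hR : 0 < R)
    (f : ℂ → ℂ)
    (hf : DifferentiableOn ℂ f
      {z : ℂ | Real.exp (-(s + R)) < ‖z‖ ∧
        ‖z‖ < Real.exp (s + R)}) :
    (∫⁻ z in {z : ℂ | Real.exp (-s) < ‖z‖ ∧ ‖z‖ < Real.exp s},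
        ENNReal.ofReal (‖deriv f z‖ ^ 2)) ≤
      ENNReal.ofReal (Real.exp (-(2 * R))) *
        ∫⁻ z in {z : ℂ | Real.exp (-(s + R)) < ‖z‖ ∧
            ‖z‖ < Real.exp (s + R)},
          ENNReal.ofReal (‖deriv f z‖ ^ 2) := by
  have ha : 0 < s + R := by linarith
  have hf' : DifferentiableOn ℂ f (ann (s + R)) := hf
  have hg : DifferentiableOn ℂ (deriv f) (ann (s + R)) :=
    ((hf'.analyticOnNhd (isOpen_ann (s + R))).deriv).differentiableOn
  have hE1 : (∫⁻ z in {z : ℂ | Real.exp (-s) < ‖z‖ ∧ ‖z‖ < Real.exp s},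
      ENNReal.ofReal (‖deriv f z‖ ^ 2)) = ∫⁻ z in ann s, ENNReal.ofReal (‖deriv f z‖ ^ 2) := rfl
  have hE2 : (∫⁻ z in {z : ℂ | Real.exp (-(s + R)) < ‖z‖ ∧
      ‖z‖ < Real.exp (s + R)}, ENNReal.ofReal (‖deriv f z‖ ^ 2))
      = ∫⁻ z in ann (s + R), ENNReal.ofReal (‖deriv f z‖ ^ 2) := rfl
  rw [hE1, hE2, energy_formula ha hg hs (by linarith), energy_formula ha hg ha le_rfl,
    ← ENNReal.tsum_mul_left]
  apply ENNReal.tsum_le_tsum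
  intro n
  rcases eq_or_ne n (-1) with rfl | hn
  · -- the `n = -1` coefficient vanishes
    have hzero : (∮ z in C(0,1), z^(-1-(-1:ℤ)) * deriv f z) = 0 := by
      have : (∮ z in C(0,1), z^(-1-(-1:ℤ)) * deriv f z) = ∮ z in C(0,1), deriv f z := by
        apply circleIntegral.integral_congr (by norm_num)
        intro z hz
        simp
      rw [this]
      exact circleIntegral_deriv_eq_zero ha hf'
    rw [hzero]
    simp
  · -- the mode inequality
    have hmode := mode_ineq s R hs hR (2*(n:ℝ)+2) ?_
    · calc ENNReal.ofReal (2*π * ‖(2*π*Complex.I)⁻¹ *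
            (∮ z in C(0,1), z^(-1-n) * deriv f z)‖^2) *
            ∫⁻ x in Ioo (-s) s, ENNReal.ofReal (Real.exp ((2*(n:ℝ)+2) * x))
          ≤ ENNReal.ofReal (2*π * ‖(2*π*Complex.I)⁻¹ *
              (∮ z in C(0,1), z^(-1-n) * deriv f z)‖^2) *
              (ENNReal.ofReal (Real.exp (-(2*R))) *
                ∫⁻ x in Ioo (-(s+R)) (s+R), ENNReal.ofReal (Real.exp ((2*(n:ℝ)+2) * x))) :=
            mul_le_mul_right hmode _
        _ = _ := by ring
    · -- |2n+2| ≥ 2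
      have h1 : (1:ℝ) ≤ |(n:ℝ)+1| := by
        have : ((1:ℤ):ℝ) ≤ |((n+1 : ℤ):ℝ)| := by
          rw [← Int.cast_abs]
          exact_mod_cast Int.one_le_abs (by omega)
        push_cast at this
        simpa using this
      calc (2:ℝ) = 2 * 1 := by ring
        _ ≤ 2 * |(n:ℝ)+1| := by linarith
        _ = |2*(n:ℝ)+2| := by
            rw [show (2*(n:ℝ)+2) = 2*((n:ℝ)+1) from by ring, abs_mul]
            norm_num
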